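/- Saito duality of the roots for chain type: let p_1,…,p_n ≥ 1, d = p_1⋯p_n. Define ζ_1(t) = (1−t)^{−1} ∏_{j=2}^n (1−t^{p_j⋯p_n})^{(−1)^{n−j}} · (1−t^d)^{(−1)^{n−1}} and ζ_2(t) = (1−t)^{−1} ∏_{j=2}^n (1−t^{p_1⋯p_{j−1}})^{(−1)^j} · (1−t^d)^{(−1)^{n−1}}. Then the Saito dual of ζ_1 with respect to d equals ζ_2^{(−1)^{n−1}}, i.e. ζ_1*(t) = ζ_2(t)^{(−1)^{n−1}}. -/

import Mathlib

/-- Saito dual with respect to `d`: sends the exponent function `s` of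
`∏_{m|d}(1-t^m)^{s_m}` to `m ↦ -s(d/m)`. -/
noncomputable def saitoDual (d : ℕ) (s : ℕ →₀ ℤ) : ℕ →₀ ℤ :=
  s.sum fun m v => Finsupp.single (d / m) (-v)

lemma saitoDual_add (d : ℕ) (s t : ℕ →₀ ℤ) :
    saitoDual d (s + t) = saitoDual d s + saitoDual d t := by
  unfold saitoDual
  apply Finsupp.sum_add_index' <;> intros <;> simp [neg_add, Finsupp.single_add, add_comm]

lemma saitoDual_single (d a : ℕ) (v : ℤ) :
    saitoDual d (Finsupp.single a v) = Finsupp.single (d / a) (-v) := by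
  unfold saitoDual
  rw [Finsupp.sum_single_index]; simp

lemma saitoDual_sum (d : ℕ) (S : Finset ℕ) (f : ℕ → (ℕ →₀ ℤ)) :
    saitoDual d (∑ j ∈ S, f j) = ∑ j ∈ S, saitoDual d (f j) := by
  classical
  induction S using Finset.induction with
  | empty => simp [saitoDual]
  | insert a s h ih => rw [Finset.sum_insert h, saitoDual_add, ih, Finset.sum_insert h]

/-- Saito duality of the roots for chain type: with `d = p_1⋯p_n`,
`ζ_1 = (1−t)^{−1} ∏_{j=2}^n (1−t^{p_j⋯p_n})^{(−1)^{n−j}} (1−t^d)^{(−1)^{n−1}}`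
and
`ζ_2 = (1−t)^{−1} ∏_{j=2}^n (1−t^{p_1⋯p_{j−1}})^{(−1)^j} (1−t^d)^{(−1)^{n−1}}`,
one has `ζ_1* = ζ_2^{(−1)^{n−1}}` (Saito dual with respect to `d`). -/
theorem chain_root_saito_duality (n : ℕ) (hn : 1 ≤ n) (p : Fin n → ℕ)
    (hp : ∀ i, 1 ≤ p i) :
    saitoDual ((List.ofFn p).prod)
        (Finsupp.single 1 (-1 : ℤ)
          + (∑ j ∈ Finset.Icc 2 n,
              Finsupp.single (((List.ofFn p).drop (j - 1)).prod) ((-1 : ℤ) ^ (n - j)))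
          + Finsupp.single ((List.ofFn p).prod) ((-1 : ℤ) ^ (n - 1)))
      = ((-1 : ℤ) ^ (n - 1)) •
        (Finsupp.single 1 (-1 : ℤ)
          + (∑ j ∈ Finset.Icc 2 n,
              Finsupp.single (((List.ofFn p).take (j - 1)).prod) ((-1 : ℤ) ^ j))
          + Finsupp.single ((List.ofFn p).prod) ((-1 : ℤ) ^ (n - 1))) := by
  set L := List.ofFn p with hL
  have hpos : ∀ x ∈ L, 0 < x := by
    intro x hx
    rw [hL, List.mem_ofFn] at hx
    obtain ⟨i, rfl⟩ := hx
    exact hp i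
  have hd : 0 < L.prod := List.prod_pos hpos
  have h3 : ∀ k : ℕ, L.prod / (L.drop k).prod = (L.take k).prod := by
    intro k
    have hdp : 0 < (L.drop k).prod :=
      List.prod_pos fun x hx => hpos x (List.mem_of_mem_drop hx)
    rw [← List.prod_take_mul_prod_drop L k, Nat.mul_div_cancel _ hdp]
  rw [saitoDual_add, saitoDual_add, saitoDual_single, saitoDual_single, saitoDual_sum]
  simp only [saitoDual_single, h3, Nat.div_one, Nat.div_self hd, neg_neg]
  rw [smul_add, smul_add, Finset.smul_sum]
  simp only [Finsupp.smul_single, smul_eq_mul, mul_neg_one]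
  have hsq : ((-1 : ℤ)) ^ (n - 1) * (-1 : ℤ) ^ (n - 1) = 1 := by
    rw [← pow_add]; exact Even.neg_one_pow ⟨n - 1, rfl⟩
  rw [hsq]
  have key : ∀ j, 2 ≤ j → j ≤ n → (-1 : ℤ) ^ (n - 1) * (-1 : ℤ) ^ j = -(-1 : ℤ) ^ (n - j) := by
    intro j h2 hjn
    have he : n - 1 + j = (n - j) + (2 * j - 1) := by omega
    have ho : Odd (2 * j - 1) := ⟨j - 1, by omega⟩
    rw [← pow_add, he, pow_add, ho.neg_one_pow, mul_neg_one]
  have hsum : ∀ j ∈ Finset.Icc 2 n,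
      Finsupp.single ((L.take (j - 1)).prod) ((-1 : ℤ) ^ (n - 1) * (-1 : ℤ) ^ j)
        = Finsupp.single ((L.take (j - 1)).prod) (-(-1 : ℤ) ^ (n - j)) := by
    intro j hj
    rw [Finset.mem_Icc] at hj
    rw [key j hj.1 hj.2]
  rw [Finset.sum_congr rfl hsum]
  abel
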